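/- arXiv:2111.11967 — 4 statements merged into one kernel-verified Lean document; each statement's English description precedes it below -/
import Mathlib

section
/- Let T be a spherically homogeneous rooted tree and let G ≤ Aut(T) be a branch group. Then G cannot act 2-set-transitively on an infinite set: for every action of G on an infinite set X, the induced action of G on the collection of 2-element subsets of X is not transitive. -/
open scoped Pointwise

/-! ## Spherically homogeneous rooted trees -/

/-- A vertex of the spherically homogeneous rooted tree over the shifted sequence of
alphabets `i ↦ A (i + k)`: a finite word whose `j`-th letter belongs to `A (j + k)`. -/
def Vtx (A : ℕ → Type*) (k : ℕ) : Type _ :=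
  {l : List (Σ i, A i) // ∀ j (h : j < l.length), (l[j]'h).1 = j + k}

namespace Vtx

variable {A : ℕ → Type*}

/-- The length of a vertex (the distance to the root). -/
def len {k : ℕ} (v : Vtx A k) : ℕ := v.1.length

/-- The prefix relation on vertices. -/
def Pre {k : ℕ} (v w : Vtx A k) : Prop := v.1 <+: w.1

/-- The `n`-th level of the tree: all vertices of length `n`. -/
def level (A : ℕ → Type*) (k : ℕ) (n : ℕ) : Set (Vtx A k) := {v | v.len = n}

/-- Concatenation of a vertex of the tree with a word over the shifted alphabets. -/
def cat (v : Vtx A 0) (w : Vtx A v.len) : Vtx A 0 :=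
  ⟨v.1 ++ w.1, by
    intro j h
    by_cases hj : j < v.1.length
    · rw [List.getElem_append_left hj]
      exact v.2 j hj
    · push_neg at hj
      rw [List.getElem_append_right hj]
      have h2 : j - v.1.length < w.1.length := by
        have h3 := h
        simp only [List.length_append] at h3
        omega
      exact (w.2 (j - v.1.length) h2).trans
        (by show j - v.1.length + v.1.length = j + 0; omega)⟩

/-- Deleting a prefix of length `n` from a vertex. -/
def dropPre (n : ℕ) (u : Vtx A 0) : Vtx A n :=
  ⟨u.1.drop n, by
    intro j h
    have h' : n + j < u.1.length := by
      simp only [List.length_drop] at h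
      omega
    rw [List.getElem_drop]
    exact (u.2 (n + j) h').trans (by omega)⟩

end Vtx

/-- The full automorphism group of the rooted tree `T_k`:
bijections of the vertex set preserving word length and the prefix relation. -/
def treeAut (A : ℕ → Type*) (k : ℕ) : Subgroup (Equiv.Perm (Vtx A k)) where
  carrier := {f | (∀ v, (f v).len = v.len) ∧ ∀ v w, Vtx.Pre (f v) (f w) ↔ Vtx.Pre v w}
  one_mem' := ⟨fun _ => rfl, fun _ _ => Iff.rfl⟩
  mul_mem' := by
    rintro f g ⟨hf1, hf2⟩ ⟨hg1, hg2⟩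
    constructor
    · intro v
      have : (f * g) v = f (g v) := rfl
      rw [this]
      exact (hf1 (g v)).trans (hg1 v)
    · intro v w
      have e1 : (f * g) v = f (g v) := rfl
      have e2 : (f * g) w = f (g w) := rfl
      rw [e1, e2]
      exact (hf2 (g v) (g w)).trans (hg2 v w)
  inv_mem' := by
    rintro f ⟨hf1, hf2⟩
    constructor
    · intro v
      conv_rhs => rw [← Equiv.apply_symm_apply f v]
      exact (hf1 _).symm
    · intro v w
      conv_rhs => rw [← Equiv.apply_symm_apply f v, ← Equiv.apply_symm_apply f w]
      exact (hf2 _ _).symm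

variable {A : ℕ → Type*}

/-- The stabiliser `St_H(v)` of a vertex `v` in a subgroup `H ≤ Perm`. -/
def vstab {k : ℕ} (H : Subgroup (Equiv.Perm (Vtx A k))) (v : Vtx A k) :
    Subgroup (Equiv.Perm (Vtx A k)) where
  carrier := {g | g ∈ H ∧ g v = v}
  one_mem' := ⟨H.one_mem, rfl⟩
  mul_mem' := by
    rintro a b ⟨ha, ha'⟩ ⟨hb, hb'⟩
    refine ⟨H.mul_mem ha hb, ?_⟩
    have : (a * b) v = a (b v) := rfl
    rw [this, hb', ha']
  inv_mem' := by
    rintro a ⟨ha, ha'⟩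
    refine ⟨H.inv_mem ha, ?_⟩
    conv_lhs => rw [← ha']
    exact Equiv.symm_apply_apply a v

/-- The stabiliser `St_H(n)` of the `n`-th level. -/
def levStab {k : ℕ} (H : Subgroup (Equiv.Perm (Vtx A k))) (n : ℕ) :
    Subgroup (Equiv.Perm (Vtx A k)) where
  carrier := {g | g ∈ H ∧ ∀ v : Vtx A k, v.len = n → g v = v}
  one_mem' := ⟨H.one_mem, fun _ _ => rfl⟩
  mul_mem' := by
    rintro a b ⟨ha, ha'⟩ ⟨hb, hb'⟩
    refine ⟨H.mul_mem ha hb, fun v hv => ?_⟩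
    have : (a * b) v = a (b v) := rfl
    rw [this, hb' v hv, ha' v hv]
  inv_mem' := by
    rintro a ⟨ha, ha'⟩
    refine ⟨H.inv_mem ha, fun v hv => ?_⟩
    conv_lhs => rw [← ha' v hv]
    exact Equiv.symm_apply_apply a v

/-- The rigid stabiliser `rist_H(v)`: elements of `H` fixing every vertex that does not
have `v` as a prefix. -/
def rist {k : ℕ} (H : Subgroup (Equiv.Perm (Vtx A k))) (v : Vtx A k) :
    Subgroup (Equiv.Perm (Vtx A k)) where
  carrier := {g | g ∈ H ∧ ∀ w : Vtx A k, ¬ Vtx.Pre v w → g w = w}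
  one_mem' := ⟨H.one_mem, fun _ _ => rfl⟩
  mul_mem' := by
    rintro a b ⟨ha, ha'⟩ ⟨hb, hb'⟩
    refine ⟨H.mul_mem ha hb, fun w hw => ?_⟩
    have : (a * b) w = a (b w) := rfl
    rw [this, hb' w hw, ha' w hw]
  inv_mem' := by
    rintro a ⟨ha, ha'⟩
    refine ⟨H.inv_mem ha, fun w hw => ?_⟩
    conv_lhs => rw [← ha' w hw]
    exact Equiv.symm_apply_apply a w

/-- The rigid level stabiliser `rist_H(n)`: the subgroup generated by the rigid
stabilisers of the vertices on the `n`-th level. -/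
def ristLev {k : ℕ} (H : Subgroup (Equiv.Perm (Vtx A k))) (n : ℕ) :
    Subgroup (Equiv.Perm (Vtx A k)) :=
  ⨆ v ∈ {v : Vtx A k | v.len = n}, rist H v

/-- `G` acts spherically transitively: transitively on every level of the tree. -/
def SphTrans {k : ℕ} (G : Subgroup (Equiv.Perm (Vtx A k))) : Prop :=
  ∀ v w : Vtx A k, v.len = w.len → ∃ g ∈ G, g v = w

/-- `G ≤ Aut(T_k)` is a branch group. -/
structure IsBranch {k : ℕ} (G : Subgroup (Equiv.Perm (Vtx A k))) : Prop where
  le_aut : G ≤ treeAut A k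
  trans : SphTrans G
  rist_fi : ∀ n : ℕ, (ristLev G n).relIndex G ≠ 0

/-- `G ≤ Aut(T_k)` is a weakly branch group. -/
structure IsWeaklyBranch {k : ℕ} (G : Subgroup (Equiv.Perm (Vtx A k))) : Prop where
  le_aut : G ≤ treeAut A k
  trans : SphTrans G
  rist_nt : ∀ n : ℕ, ristLev G n ≠ ⊥

/-! ## Sections -/

namespace Vtx

theorem dropPre_cat (v : Vtx A 0) (w : Vtx A v.len) : dropPre v.len (cat v w) = w := by
  apply Subtype.ext
  show (v.1 ++ w.1).drop v.1.length = w.1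
  exact List.drop_left

theorem pre_cat (v : Vtx A 0) (w : Vtx A v.len) : Pre v (cat v w) := ⟨w.1, rfl⟩

theorem cat_dropPre {v u : Vtx A 0} (h : Pre v u) : cat v (dropPre v.len u) = u := by
  apply Subtype.ext
  show v.1 ++ u.1.drop v.1.length = u.1
  obtain ⟨t, ht⟩ := h
  rw [← ht, List.drop_left]

end Vtx

/-- The section map `φ_v` at the level of plain functions. -/
def secFun (v : Vtx A 0) (f : Equiv.Perm (Vtx A 0)) : Vtx A v.len → Vtx A v.len :=
  fun w => Vtx.dropPre v.len (f (Vtx.cat v w))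

theorem secFun_key {v : Vtx A 0} {f : Equiv.Perm (Vtx A 0)}
    (hf : f ∈ vstab (treeAut A 0) v) (w : Vtx A v.len) :
    Vtx.cat v (secFun v f w) = f (Vtx.cat v w) := by
  obtain ⟨⟨hlen, hpre⟩, hfix⟩ := hf
  apply Vtx.cat_dropPre
  have := (hpre v (Vtx.cat v w))
  rw [hfix] at this
  exact this.mpr (Vtx.pre_cat v w)

theorem secFun_mul {v : Vtx A 0} {f g : Equiv.Perm (Vtx A 0)}
    (hf : f ∈ vstab (treeAut A 0) v) (hg : g ∈ vstab (treeAut A 0) v) :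
    secFun v (f * g) = secFun v f ∘ secFun v g := by
  funext w
  show Vtx.dropPre v.len ((f * g) (Vtx.cat v w)) = Vtx.dropPre v.len (f (Vtx.cat v (secFun v g w)))
  rw [secFun_key hg w]
  rfl

theorem secFun_one (v : Vtx A 0) : secFun v (1 : Equiv.Perm (Vtx A 0)) = id := by
  funext w
  show Vtx.dropPre v.len ((1 : Equiv.Perm (Vtx A 0)) (Vtx.cat v w)) = w
  rw [Equiv.Perm.one_apply]
  exact Vtx.dropPre_cat v w

theorem secFun_bij {v : Vtx A 0} {f : Equiv.Perm (Vtx A 0)}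
    (hf : f ∈ vstab (treeAut A 0) v) : Function.Bijective (secFun v f) := by
  rw [Function.bijective_iff_has_inverse]
  refine ⟨secFun v f⁻¹, fun w => ?_, fun w => ?_⟩
  · have h1 := congrFun (secFun_mul (inv_mem hf) hf) w
    rw [inv_mul_cancel, secFun_one] at h1
    exact h1.symm
  · have h1 := congrFun (secFun_mul hf (inv_mem hf)) w
    rw [mul_inv_cancel, secFun_one] at h1
    exact h1.symm

open Classical in
noncomputable def secPerm (v : Vtx A 0) (f : Equiv.Perm (Vtx A 0)) :
    Equiv.Perm (Vtx A v.len) :=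
  if h : Function.Bijective (secFun v f) then Equiv.ofBijective _ h else 1

theorem secPerm_coe {v : Vtx A 0} {f : Equiv.Perm (Vtx A 0)}
    (hf : f ∈ vstab (treeAut A 0) v) : ⇑(secPerm v f) = secFun v f := by
  unfold secPerm
  rw [dif_pos (secFun_bij hf)]
  rfl

/-- The section homomorphism `φ_v : St_{Aut(T)}(v) → Perm(T_{|v|})`. -/
noncomputable def phiHom (v : Vtx A 0) :
    ↥(vstab (treeAut A 0) v) →* Equiv.Perm (Vtx A v.len) where
  toFun f := secPerm v f.1
  map_one' := by
    apply Equiv.ext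
    intro w
    show secPerm v (1 : Equiv.Perm (Vtx A 0)) w = (1 : Equiv.Perm (Vtx A v.len)) w
    rw [secPerm_coe (one_mem (vstab (treeAut A 0) v)), secFun_one]
    rfl
  map_mul' := by
    intro f g
    apply Equiv.ext
    intro w
    show secPerm v (f.1 * g.1) w = (secPerm v f.1 * secPerm v g.1) w
    have e : (secPerm v f.1 * secPerm v g.1) w = secPerm v f.1 (secPerm v g.1 w) := rfl
    rw [e, secPerm_coe (mul_mem f.2 g.2), secPerm_coe f.2, secPerm_coe g.2,
      secFun_mul f.2 g.2]
    rfl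

/-- The image `φ_v(St_H(v)) ≤ Perm(T_{|v|})` of the stabiliser of `v` in `H` under the
section homomorphism at `v`; for `H ≤ G ≤ Aut(T)` this is the subgroup written `H_v`. -/
noncomputable def secSub (v : Vtx A 0) (H : Subgroup (Equiv.Perm (Vtx A 0))) :
    Subgroup (Equiv.Perm (Vtx A v.len)) :=
  Subgroup.map (phiHom v) ((vstab H v).subgroupOf (vstab (treeAut A 0) v))

/-- A subgroup `H ≤ G` has finite bi-index if the set of double cosets
`{HgH : g ∈ G}` is finite. -/
def FiniteBiIndex {G : Type*} [Group G] (H : Subgroup G) : Prop :=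
  {S : Set G | ∃ g : G, S = (H : Set G) * {g} * (H : Set G)}.Finite

/-- The set of double cosets of a subgroup `H` of a group `M` with representatives in a
subgroup `G` of `M`; for `H ≤ G` this is the set of double cosets `H\G/H`. -/
def doubleCosets {M : Type*} [Group M] (G H : Subgroup M) : Set (Set M) :=
  {S : Set M | ∃ g ∈ G, S = (H : Set M) * {g} * (H : Set M)}

/-- The pro-normal closure of a subgroup `H ≤ G`: the intersection of the subsets `HN`,
over all nontrivial normal subgroups `N` of `G`. -/
def pronormalClosure {G : Type*} [Group G] (H : Subgroup G) : Subgroup G where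
  carrier := ⋂ N ∈ {N : Subgroup G | N.Normal ∧ N ≠ ⊥}, (H : Set G) * (N : Set G)
  one_mem' := by
    simp only [Set.mem_iInter]
    rintro N ⟨hN, -⟩
    exact ⟨1, H.one_mem, 1, N.one_mem, mul_one 1⟩
  mul_mem' := by
    intro a b ha hb
    simp only [Set.mem_iInter] at ha hb ⊢
    rintro N hN
    obtain ⟨h₁, hh₁, n₁, hn₁, rfl⟩ := ha N hN
    obtain ⟨h₂, hh₂, n₂, hn₂, rfl⟩ := hb N hN
    refine ⟨h₁ * h₂, H.mul_mem hh₁ hh₂, (h₂⁻¹ * n₁ * h₂) * n₂, ?_, by group⟩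
    refine N.mul_mem ?_ hn₂
    have := hN.1.conj_mem n₁ hn₁ h₂⁻¹
    simpa using this
  inv_mem' := by
    intro a ha
    simp only [Set.mem_iInter] at ha ⊢
    rintro N hN
    obtain ⟨h, hh, n, hn, rfl⟩ := ha N hN
    refine ⟨h⁻¹, H.inv_mem hh, h * n⁻¹ * h⁻¹, hN.1.conj_mem n⁻¹ (N.inv_mem hn) h, by group⟩

/-- A subgroup `H ≤ G` is quasi-prodense if its pro-normal closure has finite index. -/
def QuasiProdense {G : Type*} [Group G] (H : Subgroup G) : Prop :=
  (pronormalClosure H).index ≠ 0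

/-- `K` is a normal subgroup of the subgroup `H` (both subgroups of an ambient group). -/
def NormalIn {M : Type*} [Group M] (H K : Subgroup M) : Prop :=
  K ≤ H ∧ ∀ h ∈ H, ∀ k ∈ K, h * k * h⁻¹ ∈ K

/-- `K` is a subnormal subgroup of the subgroup `H`. -/
def SubnormalIn {M : Type*} [Group M] (H K : Subgroup M) : Prop :=
  ∃ (m : ℕ) (c : ℕ → Subgroup M), c 0 = K ∧ c m = H ∧ ∀ i < m, NormalIn (c (i + 1)) (c i)

/-- The iterated derived subgroups of a subgroup. -/
def iterDerived {M : Type*} [Group M] (H : Subgroup M) : ℕ → Subgroup M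
  | 0 => H
  | (k + 1) => ⁅iterDerived H k, iterDerived H k⁆

theorem Equiv.Perm.apply_inv_self {α : Type*} (f : Equiv.Perm α) (x : α) : f (f⁻¹ x) = x :=
  Equiv.apply_symm_apply f x

theorem Equiv.Perm.inv_apply_self {α : Type*} (f : Equiv.Perm α) (x : α) : f⁻¹ (f x) = x :=
  Equiv.symm_apply_apply f x

section TreeAux

variable {A : ℕ → Type*}

lemma Vtx.pre_refl {k : ℕ} (v : Vtx A k) : Vtx.Pre v v := List.prefix_refl _

lemma mem_treeAut_iff {k : ℕ} {f : Equiv.Perm (Vtx A k)} :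
    f ∈ treeAut A k ↔ (∀ v, (f v).len = v.len) ∧
      ∀ v w, Vtx.Pre (f v) (f w) ↔ Vtx.Pre v w := Iff.rfl

lemma mem_rist_iff {k : ℕ} {H : Subgroup (Equiv.Perm (Vtx A k))} {v : Vtx A k}
    {g : Equiv.Perm (Vtx A k)} :
    g ∈ rist H v ↔ g ∈ H ∧ ∀ w : Vtx A k, ¬ Vtx.Pre v w → g w = w := Iff.rfl

lemma pre_eq_of_len {k : ℕ} {v w u : Vtx A k} (hv : Vtx.Pre v u) (hw : Vtx.Pre w u)
    (h : v.len = w.len) : v = w := by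
  apply Subtype.ext
  exact (List.prefix_of_prefix_length_le hv hw (le_of_eq h)).eq_of_length h

lemma rist_fix_self {k : ℕ} {G : Subgroup (Equiv.Perm (Vtx A k))} (hle : G ≤ treeAut A k)
    {v : Vtx A k} {c : Equiv.Perm (Vtx A k)} (hc : c ∈ rist G v) : c v = v := by
  obtain ⟨hcG, hfix⟩ := hc
  by_contra h
  have hlen : (c v).len = v.len := (hle hcG).1 v
  have hnp : ¬ Vtx.Pre v (c v) := fun hp =>
    h (pre_eq_of_len hp (Vtx.pre_refl (c v)) hlen.symm).symm
  exact h (c.injective (hfix (c v) hnp) ▸ (hfix (c v) hnp))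

lemma rist_pre {k : ℕ} {G : Subgroup (Equiv.Perm (Vtx A k))} (hle : G ≤ treeAut A k)
    {v u : Vtx A k} {c : Equiv.Perm (Vtx A k)} (hc : c ∈ rist G v)
    (h : Vtx.Pre v u) : Vtx.Pre v (c u) := by
  have h2 := ((hle hc.1).2 v u).mpr h
  rwa [rist_fix_self hle hc] at h2

lemma rist_commute {k : ℕ} {G : Subgroup (Equiv.Perm (Vtx A k))} (hle : G ≤ treeAut A k)
    {v w : Vtx A k} (hvw : v ≠ w) (hlen : v.len = w.len)
    {c d : Equiv.Perm (Vtx A k)} (hc : c ∈ rist G v) (hd : d ∈ rist G w) :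
    c * d = d * c := by
  apply Equiv.ext
  intro u
  have key : ∀ (v' w' : Vtx A k) (c' d' : Equiv.Perm (Vtx A k)), v' ≠ w' → v'.len = w'.len →
      c' ∈ rist G v' → d' ∈ rist G w' → Vtx.Pre v' u → (c' * d') u = (d' * c') u := by
    intro v' w' c' d' hne hl hc' hd' hp
    have hnw : ¬ Vtx.Pre w' u := fun hw' => hne (pre_eq_of_len hp hw' hl)
    have hnw2 : ¬ Vtx.Pre w' (c' u) := fun hw' =>
      hne (pre_eq_of_len (rist_pre hle hc' hp) hw' hl)
    show c' (d' u) = d' (c' u)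
    rw [hd'.2 u hnw, hd'.2 (c' u) hnw2]
  by_cases hv : Vtx.Pre v u
  · exact key v w c d hvw hlen hc hd hv
  · by_cases hw : Vtx.Pre w u
    · exact (key w v d c (Ne.symm hvw) hlen.symm hd hc hw).symm
    · show c (d u) = d (c u)
      rw [hd.2 u hw, hc.2 u hv, hd.2 u hw]

lemma rist_conj {k : ℕ} {G : Subgroup (Equiv.Perm (Vtx A k))} (hle : G ≤ treeAut A k)
    {v : Vtx A k} {g c : Equiv.Perm (Vtx A k)} (hg : g ∈ G) (hc : c ∈ rist G v) :
    g * c * g⁻¹ ∈ rist G (g v) := by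
  refine ⟨G.mul_mem (G.mul_mem hg hc.1) (G.inv_mem hg), ?_⟩
  intro u hu
  have hnp : ¬ Vtx.Pre v (g⁻¹ u) := by
    intro hp
    have := ((hle hg).2 v (g⁻¹ u)).mpr hp
    rw [Equiv.Perm.apply_inv_self] at this
    exact hu this
  show g (c (g⁻¹ u)) = u
  rw [hc.2 _ hnp, Equiv.Perm.apply_inv_self]

end TreeAux
section LevelAux

variable {A : ℕ → Type*}

/-- Make a length-2 vertex from two letters. -/
def mkV2 (a : A 0) (b : A 1) : Vtx A 0 :=
  ⟨[⟨0, a⟩, ⟨1, b⟩], by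
    intro j h
    simp only [List.length_cons, List.length_nil] at h
    interval_cases j <;> rfl⟩

lemma mkV2_len (a : A 0) (b : A 1) : (mkV2 a b).len = 2 := rfl

lemma mkV2_inj {a a' : A 0} {b b' : A 1} (h : mkV2 a b = mkV2 a' b') : a = a' ∧ b = b' := by
  have := congrArg Subtype.val h
  simp only [mkV2, List.cons.injEq, and_true] at this
  exact ⟨sigma_mk_injective this.1, sigma_mk_injective this.2⟩

lemma mem_range_sigma_mk {x : Σ i, A i} {j : ℕ} (h : x.1 = j) :
    x ∈ Set.range (Sigma.mk j) := by
  obtain ⟨i, a⟩ := x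
  simp only at h
  subst h
  exact ⟨a, rfl⟩

lemma level2_finite [∀ i, Fintype (A i)] : {v : Vtx A 0 | v.len = 2}.Finite := by
  have hinj : Set.InjOn (fun v : Vtx A 0 => (v.1[0]?, v.1[1]?)) {v | v.len = 2} := by
    intro v hv w hw h
    simp only [Prod.mk.injEq] at h
    apply Subtype.ext
    apply List.ext_getElem?
    intro n
    match n with
    | 0 => exact h.1
    | 1 => exact h.2
    | (n+2) =>
      rw [List.getElem?_eq_none, List.getElem?_eq_none]
      · show (w.1.length ≤ n + 2); rw [show w.1.length = 2 from hw]; omega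
      · show (v.1.length ≤ n + 2); rw [show v.1.length = 2 from hv]; omega
  apply Set.Finite.of_finite_image _ hinj
  have hbig : ((fun v : Vtx A 0 => (v.1[0]?, v.1[1]?)) '' {v | v.len = 2}) ⊆
      (some '' Set.range (Sigma.mk 0)) ×ˢ (some '' Set.range (Sigma.mk 1)) := by
    rintro p ⟨v, hv, rfl⟩
    have hl : v.1.length = 2 := hv
    have h0 : (0:ℕ) < v.1.length := by omega
    have h1 : (1:ℕ) < v.1.length := by omega
    constructor
    · simp only [Set.mem_image, List.getElem?_eq_getElem h0]
      exact ⟨v.1[0], mem_range_sigma_mk (by simpa using v.2 0 h0), rfl⟩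
    · simp only [Set.mem_image, List.getElem?_eq_getElem h1]
      exact ⟨v.1[1], mem_range_sigma_mk (by simpa using v.2 1 h1), rfl⟩
  exact Set.Finite.subset (Set.Finite.prod ((Set.finite_range _).image _)
    ((Set.finite_range _).image _)) hbig

end LevelAux
section ActionAux

variable {A : ℕ → Type*} {G : Subgroup (Equiv.Perm (Vtx A 0))} {X : Type*}

/-- `x` and `y` are joined by the image of an element of the rigid stabiliser of `w`. -/
def RelR (φ : G →* Equiv.Perm X) (w : Vtx A 0) (x y : X) : Prop :=
  ∃ c : G, (c : Equiv.Perm (Vtx A 0)) ∈ rist G w ∧ φ c x = y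

variable {φ : G →* Equiv.Perm X}

lemma RelR.refl (φ : G →* Equiv.Perm X) (w : Vtx A 0) (x : X) : RelR φ w x x :=
  ⟨1, by rw [OneMemClass.coe_one]; exact (rist G w).one_mem, by rw [map_one]; rfl⟩

lemma RelR.symm {w : Vtx A 0} {x y : X} (h : RelR φ w x y) : RelR φ w y x := by
  obtain ⟨c, hc, hcx⟩ := h
  refine ⟨c⁻¹, by rw [InvMemClass.coe_inv]; exact (rist G w).inv_mem hc, ?_⟩
  rw [map_inv, ← hcx, Equiv.Perm.inv_apply_self]

lemma RelR.trans {w : Vtx A 0} {x y z : X} (h : RelR φ w x y) (h' : RelR φ w y z) :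
    RelR φ w x z := by
  obtain ⟨c, hc, hcx⟩ := h
  obtain ⟨d, hd, hdy⟩ := h'
  refine ⟨d * c, by rw [Subgroup.coe_mul]; exact (rist G w).mul_mem hd hc, ?_⟩
  rw [map_mul, Equiv.Perm.mul_apply, hcx, hdy]

lemma RelR.conj (hle : G ≤ treeAut A 0) (g : G) {w : Vtx A 0} {x y : X}
    (h : RelR φ w x y) : RelR φ ((g : Equiv.Perm (Vtx A 0)) w) (φ g x) (φ g y) := by
  obtain ⟨c, hc, hcx⟩ := h
  refine ⟨g * c * g⁻¹, ?_, ?_⟩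
  · rw [Subgroup.coe_mul, Subgroup.coe_mul, InvMemClass.coe_inv]
    exact rist_conj hle g.2 hc
  · rw [map_mul, map_mul, map_inv]
    simp only [Equiv.Perm.mul_apply, Equiv.Perm.inv_apply_self]
    rw [hcx]

/-- The set of level-2 vertices joining `x` to `y`. -/
def WSet (φ : G →* Equiv.Perm X) (x y : X) : Set (Vtx A 0) :=
  {w | w.len = 2 ∧ RelR φ w x y}

lemma WSet_subset (x y : X) : WSet φ x y ⊆ {v : Vtx A 0 | v.len = 2} :=
  fun _ h => h.1

lemma WSet_finite [∀ i, Fintype (A i)] (x y : X) : (WSet φ x y).Finite :=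
  level2_finite.subset (WSet_subset x y)

lemma WSet_symm (x y : X) : WSet φ x y = WSet φ y x := by
  ext w
  exact ⟨fun h => ⟨h.1, h.2.symm⟩, fun h => ⟨h.1, h.2.symm⟩⟩

lemma WSet_image (hle : G ≤ treeAut A 0) (g : G) (x y : X) :
    WSet φ (φ g x) (φ g y) = (g : Equiv.Perm (Vtx A 0)) '' WSet φ x y := by
  ext w
  constructor
  · rintro ⟨hwlen, hwrel⟩
    have h1 := hwrel.conj hle g⁻¹
    simp only [map_inv, Equiv.Perm.inv_apply_self, InvMemClass.coe_inv] at h1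
    refine ⟨(g : Equiv.Perm (Vtx A 0))⁻¹ w, ⟨?_, h1⟩, Equiv.Perm.apply_inv_self _ _⟩
    rw [show ((g : Equiv.Perm (Vtx A 0))⁻¹ w).len = w.len from
      (hle (G.inv_mem g.2)).1 w]
    exact hwlen
  · rintro ⟨w', ⟨hwlen, hwrel⟩, rfl⟩
    exact ⟨((hle g.2).1 w').trans hwlen, hwrel.conj hle g⟩

lemma WSet_ncard_eq [∀ i, Fintype (A i)] (hle : G ≤ treeAut A 0)
    (hpair : ∀ x y x' y' : X, x ≠ y → x' ≠ y' →
      ∃ g : G, (φ g x = x' ∧ φ g y = y') ∨ (φ g x = y' ∧ φ g y = x'))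
    {x y x' y' : X} (hxy : x ≠ y) (hxy' : x' ≠ y') :
    (WSet φ x y).ncard = (WSet φ x' y').ncard := by
  obtain ⟨g, hg⟩ := hpair x y x' y' hxy hxy'
  rcases hg with ⟨h1, h2⟩ | ⟨h1, h2⟩
  · rw [← h1, ← h2, WSet_image hle, Set.ncard_image_of_injective _ (Equiv.injective _)]
  · rw [← h1, ← h2, WSet_symm, WSet_image hle,
      Set.ncard_image_of_injective _ (Equiv.injective _)]

end ActionAux
/-- A branch group cannot act 2-set-transitively on an infinite set: for every action
of the branch group `G` on an infinite set `X`, the induced action on 2-element subsets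
of `X` is not transitive. -/
theorem branch_not_two_set_transitive
    (A : ℕ → Type*) [∀ i, Fintype (A i)] (hA : ∀ i, 2 ≤ Fintype.card (A i))
    (G : Subgroup (Equiv.Perm (Vtx A 0))) (hG : IsBranch G)
    (X : Type*) [Infinite X] (φ : G →* Equiv.Perm X) :
    ¬ ∀ S T : Set X, S.ncard = 2 → T.ncard = 2 → ∃ g : G, ⇑(φ g) '' S = T := by
  intro hT
  classical
  have hle : G ≤ treeAut A 0 := hG.le_aut
  obtain ⟨x₀⟩ : Nonempty X := inferInstance
  -- matching of pairs
  have hpair : ∀ x y x' y' : X, x ≠ y → x' ≠ y' →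
      ∃ g : G, (φ g x = x' ∧ φ g y = y') ∨ (φ g x = y' ∧ φ g y = x') := by
    intro x y x' y' hxy hxy'
    obtain ⟨g, hg⟩ := hT {x, y} {x', y'} (Set.ncard_pair hxy) (Set.ncard_pair hxy')
    rw [Set.image_pair, Set.pair_eq_pair_iff] at hg
    exact ⟨g, hg⟩
  -- transitivity
  have htrans : ∀ x y : X, ∃ g : G, φ g x = y := by
    by_cases hid : ∀ (g : G) (x : X), φ g x = x
    · obtain ⟨y, hy⟩ := exists_ne x₀
      obtain ⟨z, hz⟩ := (((Set.finite_singleton y).insert x₀).infinite_compl).nonempty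
      simp only [Set.mem_compl_iff, Set.mem_insert_iff, Set.mem_singleton_iff, not_or] at hz
      obtain ⟨g, hg⟩ := hpair x₀ y x₀ z (Ne.symm hy) (Ne.symm hz.1)
      rcases hg with ⟨h1, h2⟩ | ⟨h1, h2⟩
      · rw [hid] at h2; exact absurd h2.symm hz.2
      · rw [hid] at h1; exact absurd h1.symm hz.1
    · push_neg at hid
      obtain ⟨g₀, x₁, hg₀⟩ := hid
      have horb : ∀ u : X, ∃ h : G, φ h x₁ = u := by
        intro u
        by_cases hux : u = x₁
        · exact ⟨1, by rw [map_one, hux]; rfl⟩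
        · by_cases huy : u = φ g₀ x₁
          · exact ⟨g₀, huy.symm⟩
          · obtain ⟨g', hg'⟩ := hpair x₁ (φ g₀ x₁) x₁ u (Ne.symm hg₀) (Ne.symm hux)
            rcases hg' with ⟨h1, h2⟩ | ⟨h1, h2⟩
            · exact ⟨g' * g₀, by rw [map_mul, Equiv.Perm.mul_apply]; exact h2⟩
            · exact ⟨g', h1⟩
      intro x y
      obtain ⟨a, ha⟩ := horb x
      obtain ⟨b, hb⟩ := horb y
      refine ⟨b * a⁻¹, ?_⟩
      rw [map_mul, map_inv, Equiv.Perm.mul_apply, ← ha, Equiv.Perm.inv_apply_self, hb]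
  -- main case split: is some level-2 rigid stabiliser transitive?
  by_cases hFE : ∃ w : Vtx A 0, w.len = 2 ∧ ∀ x y : X, RelR φ w x y
  · -- Case A : some (hence every) level-2 rigid vertex stabiliser acts transitively on X
    obtain ⟨w₀, hw₀len, hw₀full⟩ := hFE
    have hFullAll : ∀ w : Vtx A 0, w.len = 2 → ∀ x y : X, RelR φ w x y := by
      intro w hwlen x y
      obtain ⟨g, hgG, hgw⟩ := hG.trans w₀ w (by rw [hw₀len, hwlen])
      have h2 := (hw₀full (φ ⟨g, hgG⟩⁻¹ x) (φ ⟨g, hgG⟩⁻¹ y)).conj hle ⟨g, hgG⟩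
      simp only [map_inv, Equiv.Perm.apply_inv_self] at h2
      rw [show ((⟨g, hgG⟩ : G) : Equiv.Perm (Vtx A 0)) w₀ = w from hgw] at h2
      exact h2
    obtain ⟨a, a', haa⟩ := Fintype.exists_pair_of_one_lt_card
      (lt_of_lt_of_le one_lt_two (hA 0))
    obtain ⟨b, b', hbb⟩ := Fintype.exists_pair_of_one_lt_card
      (lt_of_lt_of_le one_lt_two (hA 1))
    set w₁ := mkV2 (A := A) a b with hw₁def
    set w₂ := mkV2 (A := A) a b' with hw₂def
    set w₃ := mkV2 (A := A) a' b with hw₃def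
    have h12 : w₁ ≠ w₂ := fun h => hbb (mkV2_inj h).2
    have h13 : w₁ ≠ w₃ := fun h => haa (mkV2_inj h).1
    have h23 : w₂ ≠ w₃ := fun h => haa (mkV2_inj h).1
    have hφcomm : ∀ (v w : Vtx A 0), v ≠ w → v.len = 2 → w.len = 2 →
        ∀ (c d : G), (c : Equiv.Perm (Vtx A 0)) ∈ rist G v →
          (d : Equiv.Perm (Vtx A 0)) ∈ rist G w → ∀ x : X, φ c (φ d x) = φ d (φ c x) := by
      intro v w hvw hvl hwl c d hc hd x
      have h2 : c * d = d * c := Subtype.ext (rist_commute hle hvw (by rw [hvl, hwl]) hc hd)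
      rw [← Equiv.Perm.mul_apply, ← Equiv.Perm.mul_apply, ← map_mul, ← map_mul, h2]
    set Cgrp : Subgroup (Equiv.Perm X) := Subgroup.map φ ((rist G w₁).subgroupOf G) with hCdef
    have hCmem : ∀ (c : G), (c : Equiv.Perm (Vtx A 0)) ∈ rist G w₁ → φ c ∈ Cgrp :=
      fun c hc => ⟨c, Subgroup.mem_subgroupOf.mpr hc, rfl⟩
    have hCle : ∀ (v : Vtx A 0), v.len = 2 → ∀ (c : G),
        (c : Equiv.Perm (Vtx A 0)) ∈ rist G v → φ c ∈ Cgrp := by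
      intro v hv c hc
      by_cases hvw : v = w₁
      · exact hCmem c (hvw ▸ hc)
      · obtain ⟨w', hw'len, hw'v, hw'1⟩ : ∃ w' : Vtx A 0, w'.len = 2 ∧ w' ≠ v ∧ w' ≠ w₁ := by
          by_cases h2v : w₂ = v
          · exact ⟨w₃, mkV2_len _ _, by rw [← h2v]; exact h23.symm, h13.symm⟩
          · exact ⟨w₂, mkV2_len _ _, h2v, h12.symm⟩
        obtain ⟨d, hd, hdx⟩ := hFullAll w₁ (mkV2_len _ _) x₀ (φ c x₀)
        have hcd : φ c = φ d := by
          apply Equiv.ext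
          intro x
          obtain ⟨e, he, hex⟩ := hFullAll w' hw'len x₀ x
          rw [← hex]
          calc φ c (φ e x₀) = φ e (φ c x₀) :=
                hφcomm v w' (Ne.symm hw'v) hv hw'len c e hc he x₀
            _ = φ e (φ d x₀) := by rw [hdx]
            _ = φ d (φ e x₀) :=
                (hφcomm w₁ w' (Ne.symm hw'1) (mkV2_len _ _) hw'len d e hd he x₀).symm
        rw [hcd]; exact hCmem d hd
    have hsemireg : ∀ σ ∈ Cgrp, σ x₀ = x₀ → σ = 1 := by
      rintro σ ⟨c, hc, rfl⟩ hfix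
      have hc' : (c : Equiv.Perm (Vtx A 0)) ∈ rist G w₁ := Subgroup.mem_subgroupOf.mp hc
      apply Equiv.ext
      intro x
      obtain ⟨e, he, hex⟩ := hFullAll w₂ (mkV2_len _ _) x₀ x
      rw [← hex, hφcomm w₁ w₂ h12 (mkV2_len _ _) (mkV2_len _ _) c e hc' he x₀, hfix]
      rfl
    have hRnCl : ∀ r : G, r ∈ (ristLev G 2).subgroupOf G → φ r ∈ Cgrp := by
      intro r hr
      have hr' : (r : Equiv.Perm (Vtx A 0)) ∈
          ⨆ v ∈ {v : Vtx A 0 | v.len = 2}, rist G v := Subgroup.mem_subgroupOf.mp hr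
      have hC := Subgroup.iSup_induction
        (C := fun p => ∃ hp : p ∈ G, φ ⟨p, hp⟩ ∈ Cgrp) _ hr'
        (by
          intro v p hp
          by_cases hv : (v : Vtx A 0) ∈ {v : Vtx A 0 | v.len = 2}
          · rw [iSup_pos hv] at hp
            exact ⟨hp.1, hCle v hv ⟨p, hp.1⟩ hp⟩
          · rw [iSup_neg hv] at hp
            rw [Subgroup.mem_bot.mp hp]
            exact ⟨G.one_mem, by
              rw [show (⟨1, G.one_mem⟩ : G) = 1 from rfl, map_one]; exact Cgrp.one_mem⟩)
        ⟨G.one_mem, by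
          rw [show (⟨1, G.one_mem⟩ : G) = 1 from rfl, map_one]; exact Cgrp.one_mem⟩
        (by
          rintro p q ⟨hp, hfp⟩ ⟨hq, hfq⟩
          refine ⟨G.mul_mem hp hq, ?_⟩
          rw [show (⟨p * q, G.mul_mem hp hq⟩ : G) = ⟨p, hp⟩ * ⟨q, hq⟩ from rfl, map_mul]
          exact Cgrp.mul_mem hfp hfq)
      obtain ⟨hp, h⟩ := hC
      rwa [show r = ⟨(r : Equiv.Perm (Vtx A 0)), hp⟩ from Subtype.ext rfl]
    have hQfin : Finite (G ⧸ (ristLev G 2).subgroupOf G) := by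
      rw [← not_infinite_iff_finite]
      intro hinf
      exact (hG.rist_fi 2) (Subgroup.index_eq_zero_iff_infinite.mpr hinf)
    set SS : Set (Equiv.Perm X) := {σ | (∃ g : G, φ g = σ) ∧ σ x₀ = x₀} with hSSdef
    have hSSfin : SS.Finite := by
      rw [← Set.finite_coe_iff]
      have hinj : Function.Injective (fun σ : SS =>
          (QuotientGroup.mk (Classical.choose σ.2.1) :
            G ⧸ (ristLev G 2).subgroupOf G)) := by
        intro σ τ h
        have hσ : φ (Classical.choose σ.2.1) = σ.1 := Classical.choose_spec σ.2.1
        have hτ : φ (Classical.choose τ.2.1) = τ.1 := Classical.choose_spec τ.2.1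
        simp only at h
        rw [QuotientGroup.eq] at h
        have hmem := hRnCl _ h
        have h1 : φ ((Classical.choose σ.2.1)⁻¹ * (Classical.choose τ.2.1))
            = σ.1⁻¹ * τ.1 := by rw [map_mul, map_inv, hσ, hτ]
        have hfixσ : σ.1⁻¹ x₀ = x₀ := by
          conv_lhs => rw [← σ.2.2]
          rw [Equiv.Perm.inv_apply_self]
        have hone : σ.1⁻¹ * τ.1 = 1 := by
          refine hsemireg _ (h1 ▸ hmem) ?_
          rw [Equiv.Perm.mul_apply, τ.2.2, hfixσ]
        exact Subtype.ext (inv_mul_eq_one.mp hone)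
      exact Finite.of_injective _ hinj
    obtain ⟨y₀, hy₀⟩ := exists_ne x₀
    obtain ⟨t₀, ht₀⟩ := htrans y₀ x₀
    have hcov : (Set.univ : Set X) ⊆ {x₀} ∪ ((fun σ : Equiv.Perm X => σ y₀) '' SS)
        ∪ ((fun σ : Equiv.Perm X => σ (φ t₀ x₀)) '' SS) := by
      intro z _
      by_cases hz : z = x₀
      · exact Or.inl (Or.inl hz)
      · obtain ⟨g, hg⟩ := hpair x₀ y₀ x₀ z (Ne.symm hy₀) (Ne.symm hz)
        rcases hg with ⟨h1, h2⟩ | ⟨h1, h2⟩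
        · exact Or.inl (Or.inr ⟨φ g, ⟨⟨g, rfl⟩, h1⟩, h2⟩)
        · refine Or.inr ⟨φ (g * t₀⁻¹), ⟨⟨g * t₀⁻¹, rfl⟩, ?_⟩, ?_⟩
          · rw [map_mul, map_inv, Equiv.Perm.mul_apply,
              show (φ t₀)⁻¹ x₀ = y₀ from by
                conv_lhs => rw [← ht₀]
                rw [Equiv.Perm.inv_apply_self]]
            exact h2
          · show φ (g * t₀⁻¹) (φ t₀ x₀) = z
            rw [map_mul, map_inv, Equiv.Perm.mul_apply, Equiv.Perm.inv_apply_self]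
            exact h1
    have hfinU : (Set.univ : Set X).Finite :=
      Set.Finite.subset (((Set.finite_singleton x₀).union (hSSfin.image _)).union
        (hSSfin.image _)) hcov
    exact Set.infinite_univ hfinU
  · -- Case B : no level-2 rigid vertex stabiliser acts transitively on X
    by_cases hClassFin : ∀ w : Vtx A 0, w.len = 2 → ∀ x : X, {y : X | RelR φ w x y}.Finite
    · -- B2 : all orbits finite
      by_cases hNT : ∃ w : Vtx A 0, w.len = 2 ∧ ∃ a b : X, a ≠ b ∧ RelR φ w a b
      · obtain ⟨w₀, hw₀, a, b, hab, hrel⟩ := hNT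
        have hcard0 : (WSet φ a b).ncard ≠ 0 := by
          rw [Ne, Set.ncard_eq_zero (WSet_finite a b), ← Ne, ← Set.nonempty_iff_ne_empty]
          exact ⟨w₀, hw₀, hrel⟩
        have hcov : (Set.univ : Set X) ⊆
            insert x₀ (⋃ w ∈ {v : Vtx A 0 | v.len = 2}, {y : X | RelR φ w x₀ y}) := by
          intro z _
          by_cases hz : z = x₀
          · exact hz ▸ Set.mem_insert _ _
          · have hnc : (WSet φ x₀ z).ncard ≠ 0 := by
              rw [WSet_ncard_eq hle hpair (Ne.symm hz) hab]; exact hcard0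
            obtain ⟨w, hwlen, hwrel⟩ := Set.nonempty_of_ncard_ne_zero hnc
            exact Set.mem_insert_of_mem _ (Set.mem_biUnion hwlen hwrel)
        have hfin : (Set.univ : Set X).Finite :=
          Set.Finite.subset (((level2_finite).biUnion
            (fun w hw => hClassFin w hw x₀)).insert x₀) hcov
        exact Set.infinite_univ hfin
      · -- degenerate : every level-2 rigid stabiliser acts trivially
        push_neg at hNT
        have hTriv : ∀ w : Vtx A 0, w.len = 2 → ∀ x y : X, RelR φ w x y → x = y := by
          intro w hw x y hrel
          by_contra hne
          exact (hNT w hw x y hne) hrel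
        have hker : ∀ r : G, r ∈ (ristLev G 2).subgroupOf G → ∀ x : X, φ r x = x := by
          intro r hr
          have hr' : (r : Equiv.Perm (Vtx A 0)) ∈
              ⨆ v ∈ {v : Vtx A 0 | v.len = 2}, rist G v := Subgroup.mem_subgroupOf.mp hr
          have hC := Subgroup.iSup_induction
            (C := fun p => ∃ hp : p ∈ G, ∀ x : X, φ ⟨p, hp⟩ x = x) _ hr'
            (by
              intro v p hp
              by_cases hv : (v : Vtx A 0) ∈ {v : Vtx A 0 | v.len = 2}
              · rw [iSup_pos hv] at hp
                refine ⟨hp.1, fun x => ?_⟩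
                exact (hTriv v hv x _ ⟨⟨p, hp.1⟩, hp, rfl⟩).symm
              · rw [iSup_neg hv] at hp
                rw [Subgroup.mem_bot.mp hp]
                exact ⟨G.one_mem, fun x => by
                  rw [show (⟨1, G.one_mem⟩ : G) = 1 from rfl, map_one]; rfl⟩)
            ⟨G.one_mem, fun x => by
              rw [show (⟨1, G.one_mem⟩ : G) = 1 from rfl, map_one]; rfl⟩
            (by
              rintro p q ⟨hp, hfp⟩ ⟨hq, hfq⟩
              refine ⟨G.mul_mem hp hq, fun x => ?_⟩
              rw [show (⟨p * q, G.mul_mem hp hq⟩ : G) = ⟨p, hp⟩ * ⟨q, hq⟩ from rfl,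
                map_mul, Equiv.Perm.mul_apply, hfq, hfp])
          obtain ⟨hp, h⟩ := hC
          intro x
          rw [show r = ⟨(r : Equiv.Perm (Vtx A 0)), hp⟩ from Subtype.ext rfl]
          exact h x
        have hQfin : Finite (G ⧸ (ristLev G 2).subgroupOf G) := by
          rw [← not_infinite_iff_finite]
          intro hinf
          exact (hG.rist_fi 2) (Subgroup.index_eq_zero_iff_infinite.mpr hinf)
        let f : G ⧸ (ristLev G 2).subgroupOf G → X :=
          Quotient.lift (fun g : G => φ g x₀) (by
            intro g₁ g₂ hgg
            have hmem : g₁⁻¹ * g₂ ∈ (ristLev G 2).subgroupOf G :=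
              QuotientGroup.leftRel_apply.mp hgg
            have := hker _ hmem x₀
            rw [map_mul, map_inv, Equiv.Perm.mul_apply] at this
            show φ g₁ x₀ = φ g₂ x₀
            conv_lhs => rw [← this]
            rw [Equiv.Perm.apply_inv_self])
        have hsurj : Function.Surjective f := by
          intro y
          obtain ⟨g, hg⟩ := htrans x₀ y
          exact ⟨QuotientGroup.mk g, hg⟩
        haveI : Finite X := Finite.of_surjective f hsurj
        exact not_finite X
    · -- B1 : some orbit of a level-2 rigid stabiliser is infinite
      push_neg at hClassFin
      obtain ⟨w₁, hw₁len, xK, hKinf'⟩ := hClassFin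
      have hKinf : {y : X | RelR φ w₁ xK y}.Infinite := hKinf'
      set K : Set X := {y : X | RelR φ w₁ xK y} with hKdef
      have hKrel : ∀ {y : X}, y ∈ K → RelR φ w₁ xK y := fun h => h
      obtain ⟨z, hz⟩ : ∃ z : X, ¬ RelR φ w₁ xK z := by
        by_contra h
        push_neg at h
        exact hFE ⟨w₁, hw₁len, fun x y => ((h x).symm).trans (h y)⟩
      obtain ⟨y', hy'K, hy'ne⟩ : ∃ y', y' ∈ K ∧ y' ≠ xK := by
        obtain ⟨y', hy'⟩ := (hKinf.diff (Set.finite_singleton xK)).nonempty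
        exact ⟨y', hy'.1, by simpa using hy'.2⟩
      have ht0 : (WSet φ xK y').ncard ≠ 0 := by
        rw [Ne, Set.ncard_eq_zero (WSet_finite xK y'), ← Ne, ← Set.nonempty_iff_ne_empty]
        exact ⟨w₁, hw₁len, hy'K⟩
      have hzne : ∀ y ∈ K, z ≠ y := fun y hy h => hz (h ▸ hy)
      have hFinj : Set.InjOn (fun y => WSet φ z y) K := by
        intro y hy y2 hy2 hEq'
        have hEq : WSet φ z y = WSet φ z y2 := hEq'
        by_contra hne
        have hzy : z ≠ y := hzne y hy
        have h1 : (WSet φ z y).ncard = (WSet φ xK y').ncard :=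
          WSet_ncard_eq hle hpair hzy (Ne.symm hy'ne)
        obtain ⟨w, hwmem⟩ := Set.nonempty_of_ncard_ne_zero (h1 ▸ ht0)
        have hss : WSet φ z y ⊂ WSet φ y y2 := by
          constructor
          · intro w' hw'
            have hw2 : w' ∈ WSet φ z y2 := hEq ▸ hw'
            exact ⟨hw'.1, (hw'.2.symm).trans hw2.2⟩
          · intro hsup
            have hmem : w₁ ∈ WSet φ y y2 :=
              ⟨hw₁len, ((hKrel hy).symm).trans (hKrel hy2)⟩
            exact hz ((hKrel hy).trans (hsup hmem).2.symm)
        have hlt := Set.ncard_lt_ncard hss (WSet_finite y y2)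
        rw [h1, WSet_ncard_eq hle hpair hne (Ne.symm hy'ne)] at hlt
        exact lt_irrefl _ hlt
      have himg : ((fun y => WSet φ z y) '' K).Finite :=
        Set.Finite.subset (level2_finite.finite_subsets)
          (by rintro S ⟨y, _, rfl⟩; exact WSet_subset z y)
      exact hKinf (Set.Finite.of_finite_image himg hFinj)
end

section
/- Let T be a spherically homogeneous rooted tree, let G ≤ Aut(T), and let H ≤ G be a nontrivial subgroup. Let v be a vertex of T such that the H-orbit of v is not {v}, and let R ≤ rist_G(v) be a subgroup of rist_G(v) that normalises H. Then the derived subgroup [R,R] is contained in H. In particular, if H is normal in G and G acts spherically transitively on T, then rist_G'(|v|) ≤ H. -/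
open scoped Pointwise

variable {A : ℕ → Type*}

/-! ### Auxiliary lemmas for the main theorem -/

lemma perm_fix_mem {X : Type*} (r : Equiv.Perm X) (S : Set X)
    (hr : ∀ w ∉ S, r w = w) {w : X} (hw : w ∈ S) : r w ∈ S := by
  by_contra hrw
  have h1 : r (r w) = r w := hr _ hrw
  have h2 : r w = w := r.injective h1
  rw [h2] at hrw; exact hrw hw

lemma perm_comm_of_disjoint {X : Type*} (r c : Equiv.Perm X) (S T : Set X)
    (hST : ∀ w, w ∈ S → w ∉ T)
    (hr : ∀ w ∉ S, r w = w) (hc : ∀ w ∉ T, c w = w) : r * c = c * r := by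
  apply Equiv.ext; intro w
  simp only [Equiv.Perm.mul_apply]
  by_cases hwS : w ∈ S
  · rw [hc w (hST w hwS), hc (r w) (hST _ (perm_fix_mem r S hr hwS))]
  · rw [hr w hwS]
    by_cases hwT : w ∈ T
    · have hcw : c w ∈ T := perm_fix_mem c T hc hwT
      rw [hr (c w) (fun hS => hST _ hS hcw)]
    · rw [hc w hwT, hr w hwS]

lemma pre_disjoint {A : ℕ → Type*} {k : ℕ} {u u' : Vtx A k} (hlen : u.len = u'.len)
    (hne : u ≠ u') {w : Vtx A k} (h1 : Vtx.Pre u w) (h2 : Vtx.Pre u' w) : False := by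
  have hp : u.1 <+: u'.1 := List.prefix_of_prefix_length_le h1 h2 (le_of_eq hlen)
  exact hne (Subtype.ext (hp.eq_of_length hlen))

lemma comm_mem_of_rist {A : ℕ → Type*} (G H R : Subgroup (Equiv.Perm (Vtx A 0)))
    (hGaut : G ≤ treeAut A 0) (hHG : H ≤ G)
    (v : Vtx A 0) (hv : ∃ h ∈ H, h v ≠ v) (hR : R ≤ rist G v)
    (hnorm : ∀ r ∈ R, ∀ h ∈ H, r * h * r⁻¹ ∈ H) :
    ∀ r ∈ R, ∀ s ∈ R, r * s * r⁻¹ * s⁻¹ ∈ H := by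
  obtain ⟨h, hh, hhv⟩ := hv
  have hhaut := hGaut (hHG hh)
  intro r hr s hs
  have hsR : s ∈ rist G v := hR hs
  have hrR : r ∈ rist G v := hR hr
  set c : Equiv.Perm (Vtx A 0) := h * s⁻¹ * h⁻¹ with hcdef
  have hcfix : ∀ w, ¬ Vtx.Pre (h v) w → c w = w := by
    intro w hw
    have e : c w = h (s⁻¹ (h⁻¹ w)) := rfl
    have hpre : ¬ Vtx.Pre v (h⁻¹ w) := by
      intro hp
      apply hw
      have := (hhaut.2 v (h⁻¹ w)).mpr hp
      rwa [(show h (h⁻¹ w) = w from Equiv.apply_symm_apply h w)] at this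
    have hfix : s⁻¹ (h⁻¹ w) = h⁻¹ w := ((rist G v).inv_mem hsR).2 (h⁻¹ w) hpre
    rw [e, hfix, (show h (h⁻¹ w) = w from Equiv.apply_symm_apply h w)]
  have hdisj : ∀ w, w ∈ {w | Vtx.Pre v w} → w ∉ {w | Vtx.Pre (h v) w} := by
    intro w h1 h2
    have hlen : v.len = (h v).len := (hhaut.1 v).symm
    exact pre_disjoint hlen (fun e => hhv e.symm) h1 h2
  have hcomm : r * c = c * r :=
    perm_comm_of_disjoint r c {w | Vtx.Pre v w} {w | Vtx.Pre (h v) w} hdisj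
      (fun w hw => hrR.2 w hw) hcfix
  have hcmt : Commute r c := hcomm
  have hx : s * c ∈ H := by
    have h1 : s * h * s⁻¹ ∈ H := hnorm s hs h hh
    have e : s * c = (s * h * s⁻¹) * h⁻¹ := by rw [hcdef]; group
    rw [e]; exact H.mul_mem h1 (H.inv_mem hh)
  have h2 : r * (s * c) * r⁻¹ * (s * c)⁻¹ ∈ H :=
    H.mul_mem (hnorm r hr _ hx) (H.inv_mem hx)
  have hc' : c * r⁻¹ = r⁻¹ * c := hcmt.inv_left.eq.symm
  have e : r * (s * c) * r⁻¹ * (s * c)⁻¹ = r * s * r⁻¹ * s⁻¹ := by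
    calc r * (s * c) * r⁻¹ * (s * c)⁻¹
        = r * s * (c * r⁻¹) * (c⁻¹ * s⁻¹) := by group
      _ = r * s * (r⁻¹ * c) * (c⁻¹ * s⁻¹) := by rw [hc']
      _ = r * s * r⁻¹ * s⁻¹ := by group
  rw [← e]; exact h2

/-- The subgroup of elements `b ∈ G` whose commutator with a fixed `a` lies in `H`,
where `H` is normalised by `G`. -/
def commSub {M : Type*} [Group M] (G H : Subgroup M)
    (hN : ∀ g ∈ G, ∀ h ∈ H, g * h * g⁻¹ ∈ H) (a : M) : Subgroup M where
  carrier := {b | b ∈ G ∧ a * b * a⁻¹ * b⁻¹ ∈ H}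
  one_mem' := ⟨G.one_mem, by simpa using H.one_mem⟩
  mul_mem' := by
    rintro b₁ b₂ ⟨hb₁, h1⟩ ⟨hb₂, h2⟩
    refine ⟨G.mul_mem hb₁ hb₂, ?_⟩
    have e : a * (b₁ * b₂) * a⁻¹ * (b₁ * b₂)⁻¹ =
        (a * b₁ * a⁻¹ * b₁⁻¹) * (b₁ * (a * b₂ * a⁻¹ * b₂⁻¹) * b₁⁻¹) := by group
    rw [e]
    exact H.mul_mem h1 (hN b₁ hb₁ _ h2)
  inv_mem' := by
    rintro b ⟨hb, h1⟩
    refine ⟨G.inv_mem hb, ?_⟩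
    have e : a * b⁻¹ * a⁻¹ * (b⁻¹)⁻¹ = b⁻¹ * (a * b * a⁻¹ * b⁻¹)⁻¹ * (b⁻¹)⁻¹ := by group
    rw [e]
    exact hN b⁻¹ (G.inv_mem hb) _ (H.inv_mem h1)

/-- If `H ≤ G ≤ Aut(T)` is nontrivial, `v` is a vertex whose `H`-orbit is not `{v}`,
and `R ≤ rist_G(v)` normalises `H`, then `[R, R] ≤ H`.  In particular, if `H` is normal
in `G` and `G` acts spherically transitively, then `rist_G'(|v|) ≤ H`. -/
theorem commutator_rist_le_of_normalised
    (A : ℕ → Type*) [∀ i, Fintype (A i)] (hA : ∀ i, 2 ≤ Fintype.card (A i))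
    (G H R : Subgroup (Equiv.Perm (Vtx A 0)))
    (hGaut : G ≤ treeAut A 0) (hHG : H ≤ G) (hH : H ≠ ⊥)
    (v : Vtx A 0) (hv : ∃ h ∈ H, h v ≠ v)
    (hR : R ≤ rist G v) (hnorm : ∀ r ∈ R, ∀ h ∈ H, r * h * r⁻¹ ∈ H) :
    ⁅R, R⁆ ≤ H ∧
      ((∀ g ∈ G, ∀ h ∈ H, g * h * g⁻¹ ∈ H) → SphTrans G →
        ⁅ristLev G v.len, ristLev G v.len⁆ ≤ H) := by
  have part1 := comm_mem_of_rist G H R hGaut hHG v hv hR hnorm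
  constructor
  · rw [Subgroup.commutator_le]
    intro r hr s hs
    rw [commutatorElement_def]
    have e : r * s * r⁻¹ * s⁻¹ = r * s * r⁻¹ * s⁻¹ := rfl
    exact part1 r hr s hs
  · intro hN htrans
    -- every vertex at level `v.len` is moved by some element of `H`
    have hmoves : ∀ u : Vtx A 0, u.len = v.len → ∃ h ∈ H, h u ≠ u := by
      intro u hu
      obtain ⟨h, hh, hhv⟩ := hv
      obtain ⟨g, hg, hgv⟩ := htrans v u hu.symm
      refine ⟨g * h * g⁻¹, hN g hg h hh, ?_⟩
      have e : (g * h * g⁻¹) u = g (h (g⁻¹ u)) := rfl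
      have hginv : g⁻¹ u = v := by rw [← hgv, (show g⁻¹ (g v) = v from Equiv.symm_apply_apply g v)]
      rw [e, hginv]
      intro heq
      apply hhv
      apply g.injective
      rw [heq, hgv]
    have hcomm_same : ∀ u : Vtx A 0, u.len = v.len →
        ∀ a ∈ rist G u, ∀ b ∈ rist G u, a * b * a⁻¹ * b⁻¹ ∈ H := by
      intro u hu
      exact comm_mem_of_rist G H (rist G u) hGaut hHG u (hmoves u hu) le_rfl
        (fun r hr => hN r hr.1)
    have hcomm_diff : ∀ u u' : Vtx A 0, u.len = v.len → u'.len = v.len → u ≠ u' →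
        ∀ a ∈ rist G u, ∀ b ∈ rist G u', a * b = b * a := by
      intro u u' hu hu' hne a ha b hb
      exact perm_comm_of_disjoint a b {w | Vtx.Pre u w} {w | Vtx.Pre u' w}
        (fun w h1 h2 => pre_disjoint (hu.trans hu'.symm) hne h1 h2)
        (fun w hw => ha.2 w hw) (fun w hw => hb.2 w hw)
    -- step 1: commutators of an element of a single rigid stabiliser with anything in
    -- the rigid level stabiliser lie in `H`
    have step1 : ∀ u : Vtx A 0, u.len = v.len → ∀ a ∈ rist G u,
        ∀ b ∈ ristLev G v.len, a * b * a⁻¹ * b⁻¹ ∈ H := by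
      intro u hu a ha b hb
      have hKle : ristLev G v.len ≤ commSub G H hN a := by
        refine iSup₂_le ?_
        intro u' hu' b' hb'
        refine ⟨hb'.1, ?_⟩
        by_cases he : u = u'
        · exact hcomm_same u hu a ha b' (he ▸ hb')
        · have hc := hcomm_diff u u' hu hu' he a ha b' hb'
          have e1 : a * b' * a⁻¹ * b'⁻¹ = 1 := by
            rw [hc]; group
          rw [e1]; exact H.one_mem
      exact (hKle hb).2
    -- step 2: conclude for arbitrary pairs in the rigid level stabiliser
    rw [Subgroup.commutator_le]
    intro a ha b hb
    rw [commutatorElement_def]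
    have hKle : ristLev G v.len ≤ commSub G H hN a := by
      refine iSup₂_le ?_
      intro u' hu' b' hb'
      refine ⟨hb'.1, ?_⟩
      have h1 := step1 u' hu' b' hb' a ha
      have e : a * b' * a⁻¹ * b'⁻¹ = (b' * a * b'⁻¹ * a⁻¹)⁻¹ := by group
      rw [e]; exact H.inv_mem h1
    exact (hKle hb).2
end

section
/- Let T be a spherically homogeneous rooted tree, let G ≤ Aut(T) be a weakly branch group, let H ≤ G be a subgroup of finite index in G, and let K_1, K_2 ≤ H be two subnormal subgroups of H. If [K_1, K_2] = 1, then K_1 and K_2 have disjoint support: there is no vertex v of T with K_1 v ≠ {v} and K_2 v ≠ {v}. -/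
open scoped Pointwise

variable {A : ℕ → Type*}

/-! ## Auxiliary lemmas for the main theorem -/

open scoped commutatorElement

section Aux

variable {A : ℕ → Type*}

namespace Vtx

theorem pre_refl_s10 {k : ℕ} (v : Vtx A k) : Pre v v := List.prefix_refl _

theorem Pre.trans {k : ℕ} {u v w : Vtx A k} (h1 : Pre u v) (h2 : Pre v w) : Pre u w :=
  List.IsPrefix.trans h1 h2

theorem Pre.len_le {k : ℕ} {v w : Vtx A k} (h : Pre v w) : v.len ≤ w.len :=
  List.IsPrefix.length_le h

theorem Pre.eq_of_len {k : ℕ} {v w : Vtx A k} (h : Pre v w) (hl : v.len = w.len) : v = w :=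
  Subtype.ext (List.IsPrefix.eq_of_length h hl)

theorem pre_or_pre {k : ℕ} {u v w : Vtx A k} (h1 : Pre u w) (h2 : Pre v w) :
    Pre u v ∨ Pre v u := List.prefix_or_prefix_of_prefix h1 h2

theorem eq_of_pre_pre_len {k : ℕ} {u v w : Vtx A k} (h1 : Pre u w) (h2 : Pre v w)
    (hl : u.len = v.len) : u = v := by
  rcases pre_or_pre h1 h2 with h | h
  · exact h.eq_of_len hl
  · exact (h.eq_of_len hl.symm).symm

end Vtx

/-- A nontrivial permutation moves some vertex. -/
theorem exists_moved {k : ℕ} {z : Equiv.Perm (Vtx A k)} (hz : z ≠ 1) :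
    ∃ p, z p ≠ p := by
  by_contra h
  push_neg at h
  exact hz (Equiv.ext fun u => h u)

/-- An element of `Aut(T)` supported in the subtree at `q` fixes `q` itself. -/
theorem fix_root {z : Equiv.Perm (Vtx A 0)} {q : Vtx A 0}
    (hlen : ∀ u, (z u).len = u.len)
    (hfix : ∀ w, ¬ Vtx.Pre q w → z w = w) : z q = q := by
  by_cases h : Vtx.Pre q (z q)
  · exact (h.eq_of_len (hlen q).symm).symm
  · have h2 : z (z q) = z q := hfix _ h
    exact z.injective h2

/-- Conjugation moves rigid supports. -/
theorem conj_fix {g b : Equiv.Perm (Vtx A 0)} {v : Vtx A 0}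
    (hg : g ∈ treeAut A 0) (hb : ∀ w, ¬ Vtx.Pre v w → b w = w) :
    ∀ w, ¬ Vtx.Pre (g v) w → (g * b * g⁻¹) w = w := by
  intro w hw
  have h1 : ¬ Vtx.Pre v (g⁻¹ w) := by
    intro h
    have := (hg.2 v (g⁻¹ w)).mpr h
    rw [show g (g⁻¹ w) = w from Equiv.apply_symm_apply g w] at this
    exact hw this
  simp only [Equiv.Perm.mul_apply]
  rw [hb _ h1, show g (g⁻¹ w) = w from Equiv.apply_symm_apply g w]

/-- Two permutations supported in disjoint subtrees commute. -/
theorem commute_disjoint {v w : Vtx A 0} (hvw : ¬ Vtx.Pre v w) (hwv : ¬ Vtx.Pre w v)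
    {a b : Equiv.Perm (Vtx A 0)}
    (ha : ∀ u, ¬ Vtx.Pre w u → a u = u) (hb : ∀ u, ¬ Vtx.Pre v u → b u = u) :
    Commute a b := by
  have hnb : ∀ u, Vtx.Pre w u → ¬ Vtx.Pre v u := by
    intro u h1 h2
    rcases Vtx.pre_or_pre h2 h1 with h | h
    · exact hvw h
    · exact hwv h
  have hda : ∀ u, a u = u ∨ (Vtx.Pre w u ∧ Vtx.Pre w (a u)) := by
    intro u
    by_cases h1 : Vtx.Pre w u
    · by_cases h2 : Vtx.Pre w (a u)
      · exact Or.inr ⟨h1, h2⟩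
      · exact Or.inl (a.injective (ha _ h2))
    · exact Or.inl (ha _ h1)
  have hdb : ∀ u, b u = u ∨ (Vtx.Pre v u ∧ Vtx.Pre v (b u)) := by
    intro u
    by_cases h1 : Vtx.Pre v u
    · by_cases h2 : Vtx.Pre v (b u)
      · exact Or.inr ⟨h1, h2⟩
      · exact Or.inl (b.injective (hb _ h2))
    · exact Or.inl (hb _ h1)
  apply Equiv.ext
  intro u
  simp only [Equiv.Perm.mul_apply]
  rcases hdb u with h1 | ⟨h1, h1'⟩ <;> rcases hda u with h2 | ⟨h2, h2'⟩
  · rw [h1, h2, h1]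
  · rw [h1, hb _ (hnb _ h2')]
  · rw [h2, ha _ (fun h => hnb _ h h1')]
  · exact absurd h1 (hnb _ h2)

/-- Lemma B: an automorphism moving `p` cannot commute with a nontrivial element
supported in the subtree at `p`. -/
theorem not_commute_of_moves {x z : Equiv.Perm (Vtx A 0)} {p : Vtx A 0}
    (hx : x ∈ treeAut A 0) (hxp : x p ≠ p) (hz : z ≠ 1)
    (hzfix : ∀ w, ¬ Vtx.Pre p w → z w = w) : ¬ Commute x z := by
  intro hc
  obtain ⟨p₂, hp₂⟩ := exists_moved hz
  have hpp₂ : Vtx.Pre p p₂ := by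
    by_contra h
    exact hp₂ (hzfix _ h)
  have hnp : ¬ Vtx.Pre (x p) p₂ := by
    intro h
    exact hxp (Vtx.eq_of_pre_pre_len h hpp₂ (hx.1 p))
  have hconj : (x * z * x⁻¹) p₂ = p₂ := conj_fix hx hzfix _ hnp
  have he : x * z * x⁻¹ = z := by
    rw [hc.eq, mul_inv_cancel_right]
  rw [he] at hconj
  exact hp₂ hconj

/-! ### Rigid stabilisers -/

theorem rist_le {k : ℕ} (H : Subgroup (Equiv.Perm (Vtx A k))) (v : Vtx A k) :
    rist H v ≤ H := fun _ hr => hr.1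

theorem rist_mono {H : Subgroup (Equiv.Perm (Vtx A 0))} {q p : Vtx A 0}
    (h : Vtx.Pre q p) : rist H p ≤ rist H q := by
  intro r hr
  refine ⟨hr.1, fun w hw => hr.2 w ?_⟩
  intro h2
  exact hw (h.trans h2)

/-! ### Iterated derived subgroups -/

theorem iterDerived_le_self {M : Type*} [Group M] (H : Subgroup M) :
    ∀ d, iterDerived H d ≤ H := by
  intro d
  induction d with
  | zero => exact le_rfl
  | succ d ih =>
    refine le_trans ?_ ih
    rw [iterDerived, Subgroup.commutator_le]
    intro g₁ h₁ g₂ h₂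
    exact mul_mem (mul_mem (mul_mem h₁ h₂) (inv_mem h₁)) (inv_mem h₂)

theorem iterDerived_succ_le {M : Type*} [Group M] (H : Subgroup M) (d : ℕ) :
    iterDerived H (d + 1) ≤ iterDerived H d := by
  rw [iterDerived, Subgroup.commutator_le]
  intro g₁ h₁ g₂ h₂
  exact mul_mem (mul_mem (mul_mem h₁ h₂) (inv_mem h₁)) (inv_mem h₂)

theorem iterDerived_mono {M : Type*} [Group M] {H K : Subgroup M} (h : H ≤ K) :
    ∀ d, iterDerived H d ≤ iterDerived K d := by
  intro d
  induction d with
  | zero => exact h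
  | succ d ih => exact Subgroup.commutator_mono ih ih

theorem iterDerived_antitone {M : Type*} [Group M] (H : Subgroup M) {d e : ℕ} (h : d ≤ e) :
    iterDerived H e ≤ iterDerived H d := by
  induction e with
  | zero => simp_all
  | succ e ih =>
    rcases Nat.lt_or_ge d (e + 1) with h2 | h2
    · exact le_trans (iterDerived_succ_le H e) (ih (by omega))
    · have : d = e + 1 := by omega
      subst this
      exact le_rfl

/-- A commuting conjugate trick. -/
theorem commutator_conj_eq {M : Type*} [Group M] (a x y : M)
    (hax : Commute a x) (hay : Commute a y) : ⁅a * x, y⁆ = ⁅x, y⁆ := by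
  have h1 : Commute a (x * y * x⁻¹ * y⁻¹) :=
    ((hax.mul_right hay).mul_right hax.inv_right).mul_right hay.inv_right
  have h2 : a⁻¹ * y⁻¹ = y⁻¹ * a⁻¹ := (hay.inv_left.inv_right).eq
  calc ⁅a * x, y⁆ = (a * x) * y * (a * x)⁻¹ * y⁻¹ := commutatorElement_def _ _
    _ = (a * (x * y * x⁻¹)) * (a⁻¹ * y⁻¹) := by group
    _ = (a * (x * y * x⁻¹)) * (y⁻¹ * a⁻¹) := by rw [h2]
    _ = (a * (x * y * x⁻¹ * y⁻¹)) * a⁻¹ := by group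
    _ = ((x * y * x⁻¹ * y⁻¹) * a) * a⁻¹ := by rw [h1.eq]
    _ = ⁅x, y⁆ := by rw [commutatorElement_def]; group

end Aux
section Aux2

variable {A : ℕ → Type*}

/-- In a weakly branch group every rigid vertex stabiliser is nontrivial. -/
theorem ristG_nontrivial {G : Subgroup (Equiv.Perm (Vtx A 0))} (hG : IsWeaklyBranch G)
    (q : Vtx A 0) : ∃ z ∈ rist G q, z ≠ 1 := by
  have h := hG.rist_nt q.len
  have hv : ∃ v : Vtx A 0, v.len = q.len ∧ rist G v ≠ ⊥ := by
    by_contra hc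
    push_neg at hc
    apply h
    rw [ristLev]
    rw [iSup_eq_bot]
    intro v
    rw [iSup_eq_bot]
    intro hvmem
    exact hc v hvmem
  obtain ⟨v, hvlen, hvne⟩ := hv
  obtain ⟨z, hzmem, hz1⟩ : ∃ z ∈ rist G v, z ≠ 1 := by
    by_contra hc
    push_neg at hc
    apply hvne
    ext x
    simp only [Subgroup.mem_bot]
    exact ⟨fun hx => hc x hx, fun hx => hx ▸ (rist G v).one_mem⟩
  obtain ⟨g, hgG, hgv⟩ := hG.trans v q hvlen
  have hgA : g ∈ treeAut A 0 := hG.le_aut hgG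
  refine ⟨g * z * g⁻¹, ⟨G.mul_mem (G.mul_mem hgG hzmem.1) (G.inv_mem hgG), ?_⟩, ?_⟩
  · rw [← hgv]
    exact conj_fix hgA hzmem.2
  · intro hc
    apply hz1
    have : z = g⁻¹ * (g * z * g⁻¹) * g := by group
    rw [this, hc]
    group

/-- In a weakly branch group, for every vertex there is a rigid stabiliser element
moving a strictly deeper vertex. -/
theorem ristG_step {G : Subgroup (Equiv.Perm (Vtx A 0))} (hG : IsWeaklyBranch G)
    (q : Vtx A 0) : ∃ s : Equiv.Perm (Vtx A 0) × Vtx A 0,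
      s.1 ∈ rist G q ∧ Vtx.Pre q s.2 ∧ s.1 s.2 ≠ s.2 ∧ q.len < s.2.len := by
  obtain ⟨z, hz, hz1⟩ := ristG_nontrivial hG q
  obtain ⟨p, hp⟩ := exists_moved hz1
  have hqp : Vtx.Pre q p := by
    by_contra h
    exact hp (hz.2 p h)
  have hroot : z q = q := fix_root (fun u => (hG.le_aut hz.1).1 u) hz.2
  have hne : q ≠ p := by
    intro h
    rw [← h] at hp
    exact hp hroot
  refine ⟨(z, p), hz, hqp, hp, ?_⟩
  rcases Nat.lt_or_ge q.len p.len with h | h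
  · exact h
  · exact absurd (hqp.eq_of_len (le_antisymm hqp.len_le h)) hne

/-- From finite relative index: every rigid stabiliser of `H` is nontrivial. -/
theorem ristH_nontrivial {G H : Subgroup (Equiv.Perm (Vtx A 0))} (hG : IsWeaklyBranch G)
    (hHG : H ≤ G) (hfi : H.relIndex G ≠ 0) (q : Vtx A 0) :
    ∃ z ∈ rist H q, z ≠ 1 := by
  choose F hF1 hF2 hF3 hF4 using ristG_step hG
  set Q : ℕ → Vtx A 0 := fun n => (fun u => (F u).2)^[n] q with hQ
  have hQsucc : ∀ n, Q (n + 1) = (F (Q n)).2 := by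
    intro n
    rw [hQ]
    simp only
    rw [Function.iterate_succ_apply']
  set Z : ℕ → Equiv.Perm (Vtx A 0) := fun n => (F (Q n)).1 with hZ
  have hZmem : ∀ n, Z n ∈ rist G (Q n) := fun n => hF1 (Q n)
  have hZmove : ∀ n, Z n (Q (n + 1)) ≠ Q (n + 1) := by
    intro n
    rw [hQsucc n]
    exact hF3 (Q n)
  have hQpre1 : ∀ n, Vtx.Pre (Q n) (Q (n + 1)) := by
    intro n
    rw [hQsucc n]
    exact hF2 (Q n)
  have hQlen1 : ∀ n, (Q n).len < (Q (n + 1)).len := by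
    intro n
    rw [hQsucc n]
    exact hF4 (Q n)
  have hQpre : ∀ i j, i ≤ j → Vtx.Pre (Q i) (Q j) := by
    intro i j hij
    induction j with
    | zero => rw [Nat.le_zero.mp hij]; exact Vtx.pre_refl_s10 _
    | succ j ih =>
      rcases Nat.lt_or_ge i (j + 1) with h | h
      · exact (ih (by omega)).trans (hQpre1 j)
      · have : i = j + 1 := by omega
        rw [this]; exact Vtx.pre_refl_s10 _
  have hQlen : ∀ i j, i < j → (Q i).len < (Q j).len := by
    intro i j hij
    induction j with
    | zero => omega
    | succ j ih =>
      rcases Nat.lt_or_ge i j with h | h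
      · exact lt_trans (ih h) (hQlen1 j)
      · have : i = j := by omega
        rw [this]; exact hQlen1 j
  have hZfixroot : ∀ n, Z n (Q n) = Q n := fun n =>
    fix_root (fun u => (hG.le_aut (hZmem n).1).1 u) (hZmem n).2
  have hZne : ∀ i j, i < j → Z i ≠ Z j := by
    intro i j hij heq
    have h2 : Z j (Q (i + 1)) = Q (i + 1) := by
      rcases Nat.lt_or_ge (i + 1) j with h | h
      · apply (hZmem j).2
        intro hpre
        have := hpre.len_le
        have := hQlen (i + 1) j h
        omega
      · have : j = i + 1 := by omega
        rw [this]
        exact hZfixroot (i + 1)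
    rw [← heq] at h2
    exact hZmove i h2
  have hfin : Finite (G ⧸ H.subgroupOf G) := by
    rw [Subgroup.relIndex] at hfi
    rw [Subgroup.index] at hfi
    exact (Nat.card_ne_zero.mp hfi).2
  have hZG : ∀ n, Z n ∈ G := fun n => (hZmem n).1
  obtain ⟨i, j, hij, hfeq⟩ := Finite.exists_ne_map_eq_of_infinite
    (fun n : ℕ => (QuotientGroup.mk (⟨Z n, hZG n⟩ : G) : G ⧸ H.subgroupOf G))
  have hmem : (⟨Z i, hZG i⟩ : G)⁻¹ * ⟨Z j, hZG j⟩ ∈ H.subgroupOf G := QuotientGroup.eq.mp hfeq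
  rw [Subgroup.mem_subgroupOf] at hmem
  have hmem' : (Z i)⁻¹ * Z j ∈ H := hmem
  have hZiQ : Z i ∈ rist G q := rist_mono (hQpre 0 i (Nat.zero_le _)) (hZmem i)
  have hZjQ : Z j ∈ rist G q := rist_mono (hQpre 0 j (Nat.zero_le _)) (hZmem j)
  have hprod : (Z i)⁻¹ * Z j ∈ rist G q := (rist G q).mul_mem ((rist G q).inv_mem hZiQ) hZjQ
  refine ⟨(Z i)⁻¹ * Z j, ⟨hmem', hprod.2⟩, ?_⟩
  intro hc
  have : Z i = Z j := inv_mul_eq_one.mp hc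
  rcases Nat.lt_or_ge i j with h | h
  · exact hZne i j h this
  · have : j < i := by omega
    exact hZne j i this (by rw [‹Z i = Z j›])

end Aux2
section Aux3

variable {A : ℕ → Type*}

/-- Nonsolvability of rigid stabilisers: every iterated derived subgroup of every
rigid stabiliser is nontrivial. -/
theorem iterDerived_rist_nontrivial {H : Subgroup (Equiv.Perm (Vtx A 0))}
    (hHAut : H ≤ treeAut A 0) (hne : ∀ q : Vtx A 0, ∃ z ∈ rist H q, z ≠ 1) :
    ∀ d (q : Vtx A 0), ∃ z ∈ iterDerived (rist H q) d, z ≠ 1 := by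
  intro d
  induction d with
  | zero => exact hne
  | succ d ih =>
    intro q
    obtain ⟨x, hxmem, hx1⟩ := ih q
    have hxR : x ∈ rist H q := iterDerived_le_self _ d hxmem
    obtain ⟨p, hxp⟩ := exists_moved hx1
    have hqp : Vtx.Pre q p := by
      by_contra h
      exact hxp (hxR.2 p h)
    obtain ⟨z, hzmem, hz1⟩ := ih p
    have hzR : z ∈ rist H p := iterDerived_le_self _ d hzmem
    have hzq : z ∈ iterDerived (rist H q) d := iterDerived_mono (rist_mono hqp) d hzmem
    refine ⟨⁅x, z⁆, Subgroup.commutator_mem_commutator hxmem hzq, ?_⟩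
    intro hc
    exact not_commute_of_moves (hHAut hxR.1) hxp hz1 hzR.2
      (commutatorElement_eq_one_iff_commute.mp hc)

/-- Lemma C: a subnormal subgroup of `H` moving a vertex `v` contains an iterated
derived subgroup of the rigid stabiliser of `v` in `H`. -/
theorem subnormal_contains_iterDerived {H K : Subgroup (Equiv.Perm (Vtx A 0))}
    (hHAut : H ≤ treeAut A 0) (hs : SubnormalIn H K)
    {g : Equiv.Perm (Vtx A 0)} (hg : g ∈ K) {v : Vtx A 0} (hgv : g v ≠ v) :
    ∃ m, iterDerived (rist H v) m ≤ K := by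
  obtain ⟨m, c, hc0, hcm, hstep⟩ := hs
  have hmono : ∀ j ≤ m, c 0 ≤ c j := by
    intro j
    induction j with
    | zero => exact fun _ => le_rfl
    | succ j ih =>
      intro hj
      exact le_trans (ih (by omega)) (hstep j (by omega)).1
  have hgH : g ∈ H := by
    rw [← hcm]
    exact hmono m le_rfl (hc0 ▸ hg)
  have hgA : g ∈ treeAut A 0 := hHAut hgH
  -- incomparability of v and g v
  have hlen : (g v).len = v.len := hgA.1 v
  have hvw : ¬ Vtx.Pre v (g v) := fun h => hgv (h.eq_of_len hlen.symm).symm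
  have hwv : ¬ Vtx.Pre (g v) v := fun h => hgv (h.eq_of_len hlen)
  have claim : ∀ j ≤ m, iterDerived (rist H v) j ≤ c (m - j) := by
    intro j
    induction j with
    | zero =>
      intro _
      rw [Nat.sub_zero, hcm]
      exact rist_le H v
    | succ j ih =>
      intro hj
      have IH := ih (by omega)
      have hi1 : m - j = (m - (j + 1)) + 1 := by omega
      set i := m - (j + 1) with hidef
      have hi : i < m := by omega
      rw [hi1] at IH
      rw [iterDerived, Subgroup.commutator_le]
      intro x hx y hy
      have hxC : x ∈ c (i + 1) := IH hx
      have hyC : y ∈ c (i + 1) := IH hy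
      have hgi : g ∈ c i := hmono i (by omega) (hc0 ▸ hg)
      have hxR : x ∈ rist H v := iterDerived_le_self _ j hx
      have hyR : y ∈ rist H v := iterDerived_le_self _ j hy
      -- the auxiliary element a = g x⁻¹ g⁻¹, supported in the subtree at g v
      set a : Equiv.Perm (Vtx A 0) := g * x⁻¹ * g⁻¹ with ha
      have hafix : ∀ u, ¬ Vtx.Pre (g v) u → a u = u :=
        conj_fix hgA ((rist H v).inv_mem hxR).2
      have hax : Commute a x := commute_disjoint hvw hwv hafix hxR.2
      have hay : Commute a y := commute_disjoint hvw hwv hafix hyR.2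
      have htmem : a * x ∈ c i := by
        have h1 : x⁻¹ * g⁻¹ * (x⁻¹)⁻¹ ∈ c i :=
          (hstep i hi).2 x⁻¹ ((c (i + 1)).inv_mem hxC) g⁻¹ ((c i).inv_mem hgi)
        have h2 : a * x = g * (x⁻¹ * g⁻¹ * (x⁻¹)⁻¹) := by rw [ha]; group
        rw [h2]
        exact (c i).mul_mem hgi h1
      have hcomm : ⁅a * x, y⁆ ∈ c i := by
        have h1 : y * (a * x)⁻¹ * y⁻¹ ∈ c i :=
          (hstep i hi).2 y hyC (a * x)⁻¹ ((c i).inv_mem htmem)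
        have h2 : ⁅a * x, y⁆ = (a * x) * (y * (a * x)⁻¹ * y⁻¹) := by
          rw [commutatorElement_def]; group
        rw [h2]
        exact (c i).mul_mem htmem h1
      rw [commutator_conj_eq a x y hax hay] at hcomm
      exact hcomm
  refine ⟨m, ?_⟩
  rw [← hc0]
  have := claim m le_rfl
  rwa [Nat.sub_self] at this

end Aux3
/-- In a weakly branch group `G`, two commuting subnormal subgroups of a finite index
subgroup `H ≤ G` have disjoint support. -/
theorem commuting_subnormal_disjoint_support
    (A : ℕ → Type*) [∀ i, Fintype (A i)] (hA : ∀ i, 2 ≤ Fintype.card (A i))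
    (G H K₁ K₂ : Subgroup (Equiv.Perm (Vtx A 0))) (hG : IsWeaklyBranch G)
    (hHG : H ≤ G) (hfi : H.relIndex G ≠ 0)
    (h₁ : SubnormalIn H K₁) (h₂ : SubnormalIn H K₂)
    (hcomm : ⁅K₁, K₂⁆ = ⊥) :
    ¬ ∃ v : Vtx A 0, (∃ g ∈ K₁, g v ≠ v) ∧ (∃ g ∈ K₂, g v ≠ v) := by
  rintro ⟨v, ⟨g₁, hg₁K, hg₁v⟩, ⟨g₂, hg₂K, hg₂v⟩⟩
  have hHAut : H ≤ treeAut A 0 := le_trans hHG hG.le_aut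
  obtain ⟨m₁, hm₁⟩ := subnormal_contains_iterDerived hHAut h₁ hg₁K hg₁v
  obtain ⟨m₂, hm₂⟩ := subnormal_contains_iterDerived hHAut h₂ hg₂K hg₂v
  set M := max m₁ m₂ with hM
  have hD1 : iterDerived (rist H v) M ≤ K₁ :=
    le_trans (iterDerived_antitone _ (le_max_left m₁ m₂)) hm₁
  have hD2 : iterDerived (rist H v) M ≤ K₂ :=
    le_trans (iterDerived_antitone _ (le_max_right m₁ m₂)) hm₂
  have hbot : iterDerived (rist H v) (M + 1) = ⊥ := by
    apply le_bot_iff.mp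
    calc iterDerived (rist H v) (M + 1)
        = ⁅iterDerived (rist H v) M, iterDerived (rist H v) M⁆ := rfl
      _ ≤ ⁅K₁, K₂⁆ := Subgroup.commutator_mono hD1 hD2
      _ = ⊥ := hcomm
  obtain ⟨z, hzmem, hz1⟩ := iterDerived_rist_nontrivial hHAut
    (ristH_nontrivial hG hHG hfi) (M + 1) v
  rw [hbot, Subgroup.mem_bot] at hzmem
  exact hz1 hzmem
end

section
/- Let T be a spherically homogeneous rooted tree, let G ≤ Aut(T) be a group of automorphisms of T, and let H ≤ G be a subgroup. For n ∈ ℕ, define ν_n : St_G(n) → ℕ by ν_n(g) = |{v ∈ L_n : φ_v(g) ∈ H_v}|, where H_v = φ_v(St_H(v)). Then ν_n is an invariant of double cosets: for all g_1, g_2 ∈ St_G(n) with H g_1 H = H g_2 H, one has ν_n(g_1) = ν_n(g_2). -/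
open scoped Pointwise

variable {A : ℕ → Type*}

theorem key_lemma {A : ℕ → Type*}
    (G H : Subgroup (Equiv.Perm (Vtx A 0)))
    (hGaut : G ≤ treeAut A 0) (hHG : H ≤ G) (n : ℕ)
    (g a b : Equiv.Perm (Vtx A 0)) (ha : a ∈ H) (hb : b ∈ H)
    (hg : g ∈ levStab G n) (hg2 : a * g * b ∈ levStab G n)
    (v : Vtx A 0) (hv : v.len = n)
    (hmem : secPerm v (a * g * b) ∈ secSub v H) :
    secPerm (b v) g ∈ secSub (b v) H := by
  have haut : ∀ f ∈ H, f ∈ treeAut A 0 := fun f hf => hGaut (hHG hf)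
  have hbaut : b ∈ treeAut A 0 := haut b hb
  have haaut : a ∈ treeAut A 0 := haut a ha
  have blen : (b v).len = v.len := hbaut.1 v
  have hbvn : (b v).len = n := blen.trans hv
  have gfix : g (b v) = b v := hg.2 (b v) hbvn
  have g2fix : (a * g * b) v = v := hg2.2 v hv
  have habv : a (b v) = v := by
    have : (a * g * b) v = a (g (b v)) := rfl
    rw [this, gfix] at g2fix
    exact g2fix
  have hinvv : a⁻¹ v = b v :=
    a.injective (by rw [show a (a⁻¹ v) = v from Equiv.apply_symm_apply a v, habv])
  -- unfold the hypothesis membership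
  unfold secSub at hmem
  obtain ⟨x, hx, hφ⟩ := Subgroup.mem_map.mp hmem
  rw [Subgroup.mem_subgroupOf] at hx
  obtain ⟨hxH, hxv⟩ := hx
  have hxaut : (x : Equiv.Perm (Vtx A 0)) ∈ treeAut A 0 := x.2.1
  -- the candidate element
  set y : Equiv.Perm (Vtx A 0) := a⁻¹ * (x : Equiv.Perm (Vtx A 0)) * b⁻¹ with hy
  have hyH : y ∈ H := H.mul_mem (H.mul_mem (H.inv_mem ha) hxH) (H.inv_mem hb)
  have hyfix : y (b v) = b v := by
    have e : y (b v) = a⁻¹ ((x : Equiv.Perm (Vtx A 0)) (b⁻¹ (b v))) := rfl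
    rw [e, show b⁻¹ (b v) = v from Equiv.symm_apply_apply b v, hxv, hinvv]
  have hyaut : y ∈ treeAut A 0 := haut y hyH
  have hystab : y ∈ vstab (treeAut A 0) (b v) := ⟨hyaut, hyfix⟩
  have hgstab : g ∈ vstab (treeAut A 0) (b v) := ⟨hGaut hg.1, gfix⟩
  have hg2stab : a * g * b ∈ vstab (treeAut A 0) v := ⟨hGaut hg2.1, hg2.2 v hv⟩
  unfold secSub
  rw [Subgroup.mem_map]
  refine ⟨⟨y, hystab⟩, ?_, ?_⟩
  · rw [Subgroup.mem_subgroupOf]; exact ⟨hyH, hyfix⟩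
  · show secPerm (b v) y = secPerm (b v) g
    apply Equiv.ext
    intro u
    rw [show ⇑(secPerm (b v) y) = secFun (b v) y from secPerm_coe hystab,
      show ⇑(secPerm (b v) g) = secFun (b v) g from secPerm_coe hgstab]
    -- key computation
    set z : Vtx A 0 := b⁻¹ (Vtx.cat (b v) u) with hz
    have hbinv : b⁻¹ ∈ treeAut A 0 := (treeAut A 0).inv_mem hbaut
    have hpre : Vtx.Pre v z := by
      have := (hbinv.2 (b v) (Vtx.cat (b v) u)).mpr (Vtx.pre_cat (b v) u)
      rwa [show (b⁻¹ : Equiv.Perm (Vtx A 0)) (b v) = v from Equiv.symm_apply_apply b v]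
        at this
    have hzcat : Vtx.cat v (Vtx.dropPre v.len z) = z := Vtx.cat_dropPre hpre
    set u' : Vtx A v.len := Vtx.dropPre v.len z with hu'
    have hsecs : secFun v (x : Equiv.Perm (Vtx A 0)) u' = secFun v (a * g * b) u' := by
      rw [← secPerm_coe x.2, ← secPerm_coe hg2stab]
      have : phiHom v x = secPerm v ((x : Equiv.Perm (Vtx A 0))) := rfl
      rw [← this, hφ]
    have hxz : (x : Equiv.Perm (Vtx A 0)) z = (a * g * b) z := by
      rw [← hzcat, ← secFun_key x.2 u', ← secFun_key hg2stab u', hsecs]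
    show Vtx.dropPre (b v).len (y (Vtx.cat (b v) u)) =
      Vtx.dropPre (b v).len (g (Vtx.cat (b v) u))
    have e1 : y (Vtx.cat (b v) u) = a⁻¹ ((x : Equiv.Perm (Vtx A 0)) z) := rfl
    have e2 : a⁻¹ ((a * g * b) z) = g (Vtx.cat (b v) u) := by
      have : (a * g * b) z = a (g (b z)) := rfl
      rw [this, hz, show b (b⁻¹ (Vtx.cat (b v) u)) = Vtx.cat (b v) u from Equiv.apply_symm_apply b (Vtx.cat (b v) u),
        show a⁻¹ (a (g (Vtx.cat (b v) u))) = g (Vtx.cat (b v) u) from Equiv.symm_apply_apply a (g (Vtx.cat (b v) u))]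
    rw [e1, hxz, e2]

/-- The map `ν_n(g) = |{v ∈ L_n : φ_v(g) ∈ H_v}|` is an invariant of the double
cosets of `H`. -/
theorem nu_invariant_of_double_coset
    (A : ℕ → Type*) [∀ i, Fintype (A i)] (hA : ∀ i, 2 ≤ Fintype.card (A i))
    (G H : Subgroup (Equiv.Perm (Vtx A 0)))
    (hGaut : G ≤ treeAut A 0) (hHG : H ≤ G) (n : ℕ)
    (g₁ g₂ : Equiv.Perm (Vtx A 0)) (hg₁ : g₁ ∈ levStab G n) (hg₂ : g₂ ∈ levStab G n)
    (hd : (H : Set (Equiv.Perm (Vtx A 0))) * {g₁} * (H : Set (Equiv.Perm (Vtx A 0))) =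
        (H : Set (Equiv.Perm (Vtx A 0))) * {g₂} * (H : Set (Equiv.Perm (Vtx A 0)))) :
    {v : Vtx A 0 | v.len = n ∧ secPerm v g₁ ∈ secSub v H}.ncard =
      {v : Vtx A 0 | v.len = n ∧ secPerm v g₂ ∈ secSub v H}.ncard := by
  have hg2mem : g₂ ∈ (H : Set (Equiv.Perm (Vtx A 0))) * {g₁} * (H : Set (Equiv.Perm (Vtx A 0))) := by
    rw [hd]
    have h1 : (1 : Equiv.Perm (Vtx A 0)) * g₂ * 1 ∈
        (H : Set (Equiv.Perm (Vtx A 0))) * {g₂} * (H : Set (Equiv.Perm (Vtx A 0))) :=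
      Set.mul_mem_mul (Set.mul_mem_mul H.one_mem (Set.mem_singleton g₂)) H.one_mem
    simpa using h1
  obtain ⟨p, hp, c, hcH, hpc⟩ := Set.mem_mul.mp hg2mem
  obtain ⟨a, haH, q, hq, hpq⟩ := Set.mem_mul.mp hp
  rw [Set.mem_singleton_iff] at hq
  rw [hq] at hpq
  have hdecomp : g₂ = a * g₁ * c := by rw [← hpc, ← hpq]
  have hflip : a⁻¹ * g₂ * c⁻¹ = g₁ := by rw [hdecomp]; group
  have hclen : ∀ w : Vtx A 0, (c w).len = w.len := fun w => (hGaut (hHG hcH)).1 w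
  have hiff : ∀ v : Vtx A 0,
      (v.len = n ∧ secPerm v g₂ ∈ secSub v H) ↔
        ((c v).len = n ∧ secPerm (c v) g₁ ∈ secSub (c v) H) := by
    intro v
    constructor
    · rintro ⟨hv, hmem⟩
      refine ⟨(hclen v).trans hv, ?_⟩
      have hg2' : a * g₁ * c ∈ levStab G n := hdecomp ▸ hg₂
      exact key_lemma G H hGaut hHG n g₁ a c haH hcH hg₁ hg2' v hv
        (by rwa [← hdecomp])
    · rintro ⟨hv, hmem⟩
      have hg1' : a⁻¹ * g₂ * c⁻¹ ∈ levStab G n := hflip ▸ hg₁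
      have := key_lemma G H hGaut hHG n g₂ a⁻¹ c⁻¹ (H.inv_mem haH) (H.inv_mem hcH)
        hg₂ hg1' (c v) hv (by rwa [hflip])
      rw [show c⁻¹ (c v) = v from Equiv.symm_apply_apply c v] at this
      exact ⟨by rw [← hclen v]; exact hv, this⟩
  have himg : {v : Vtx A 0 | v.len = n ∧ secPerm v g₁ ∈ secSub v H} =
      ⇑c '' {v : Vtx A 0 | v.len = n ∧ secPerm v g₂ ∈ secSub v H} := by
    ext w
    constructor
    · intro hw
      refine ⟨c⁻¹ w, (hiff (c⁻¹ w)).mpr ?_, Equiv.apply_symm_apply c w⟩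
      rwa [show c (c⁻¹ w) = w from Equiv.apply_symm_apply c w]
    · rintro ⟨v, hv, rfl⟩
      exact (hiff v).mp hv
  rw [himg, Set.ncard_image_of_injective _ c.injective]
end
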